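/- Let t ≥ 2 and let G be a finite simple connected graph that contains no induced K_{1,t} and that has a nonempty dominating target D of cardinality at most k. Then every set of pairwise nonadjacent extremities of G has cardinality at most k(t−1). -/

import Mathlib

variable {V : Type*}

/-- The closed neighbourhood `N[v]` of a vertex. -/
def closedNbhd (G : SimpleGraph V) (v : V) : Set V := insert v (G.neighborSet v)

/-- `N[S] = ⋃_{v ∈ S} N[v]`. -/
def closedNbhdSet (G : SimpleGraph V) (S : Set V) : Set V := ⋃ v ∈ S, closedNbhd G v

/-- A vertex `v` is an extremity if the subgraph induced on `V \ N[v]` is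
connected (possibly empty). -/
def IsExtremity (G : SimpleGraph V) (v : V) : Prop :=
  (G.induce (closedNbhd G v)ᶜ).Preconnected

/-- `M` is a module: every vertex outside `M` is adjacent to all of `M` or none of `M`. -/
def IsModuleSet (G : SimpleGraph V) (M : Set V) : Prop :=
  ∀ z ∉ M, ∀ x ∈ M, ∀ y ∈ M, (G.Adj z x ↔ G.Adj z y)

/-- A graph is prime if its only modules are `∅`, `V` and the singletons. -/
def IsPrimeGraph (G : SimpleGraph V) : Prop :=
  ∀ M : Set V, IsModuleSet G M → M = ∅ ∨ M = Set.univ ∨ ∃ v, M = {v}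

/-- Eccentricity of a vertex in a finite graph. -/
noncomputable def ecc [Fintype V] (G : SimpleGraph V) (u : V) : ℕ :=
  Finset.univ.sup (G.dist u)

/-- Diameter of a finite graph. -/
noncomputable def gdiam [Fintype V] (G : SimpleGraph V) : ℕ :=
  Finset.univ.sup fun u => ecc G u

/-- `u ⊥_w v`: vertices `u` and `v` lie in different connected components of the
subgraph induced on `V \ N[w]`. -/
def Perp (G : SimpleGraph V) (w u v : V) : Prop :=
  u ∉ closedNbhd G w ∧ v ∉ closedNbhd G w ∧
    ¬ ∃ p : G.Walk u v, ∀ z ∈ p.support, z ∉ closedNbhd G w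

/-- `S` is `u`-transitive: for every `x ∈ S` and vertex `y` distinct from and
nonadjacent to `x`, `x ⊥_y u` implies `y ∈ S`. -/
def UTransitive (G : SimpleGraph V) (u : V) (S : Set V) : Prop :=
  ∀ x ∈ S, ∀ y : V, y ≠ x → ¬ G.Adj x y → Perp G y x u → y ∈ S

/-- `S` is a dominating set: every vertex lies in `N[S]`. -/
def IsDominatingSet (G : SimpleGraph V) (S : Set V) : Prop :=
  ∀ v : V, ∃ s ∈ S, v ∈ closedNbhd G s

/-- `D` is a dominating target: every superset of `D` inducing a connected
subgraph is a dominating set. -/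
def IsDomTarget (G : SimpleGraph V) (D : Set V) : Prop :=
  ∀ S : Set V, D ⊆ S → (G.induce S).Connected → IsDominatingSet G S

/-- An asteroidal set: an independent set `A` such that for every `a ∈ A`, all
vertices of `A \ {a}` lie in a single connected component of the subgraph
induced on `V \ N[a]`. -/
def IsAsteroidalSet (G : SimpleGraph V) (A : Set V) : Prop :=
  (A.Pairwise fun x y => ¬ G.Adj x y) ∧
  ∀ a ∈ A, ∀ b ∈ A, ∀ c ∈ A, b ≠ a → c ≠ a →
    ∃ p : G.Walk b c, ∀ z ∈ p.support, z ∉ closedNbhd G a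

theorem stmt_16 [Fintype V] (G : SimpleGraph V) (hG : G.Connected)
    (t k : ℕ) (ht : 2 ≤ t)
    (hK1t : ¬ ∃ (c : V) (A : Set V), A.ncard = t ∧ (∀ a ∈ A, G.Adj c a) ∧
      A.Pairwise fun a b => ¬ G.Adj a b)
    (D : Set V) (hne : D.Nonempty) (hD : IsDomTarget G D) (hk : D.ncard ≤ k) :
    ∀ A : Set V, (∀ a ∈ A, IsExtremity G a) →
      (A.Pairwise fun a b => ¬ G.Adj a b) → A.ncard ≤ k * (t - 1) := by
  classical
  intro A hExt hIndep
  obtain ⟨d0, hd0⟩ := hne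
  -- every extremity is dominated by D
  have hdom : ∀ a ∈ A, ∃ d ∈ D, a ∈ closedNbhd G d := by
    intro a ha
    by_contra h
    push_neg at h
    have hsub : D ⊆ (closedNbhd G a)ᶜ := by
      intro d hd hmem
      apply h d hd
      rcases hmem with rfl | hadj
      · exact Set.mem_insert _ _
      · exact Set.mem_insert_iff.mpr (Or.inr (G.adj_symm hadj))
    haveI : Nonempty ↑(closedNbhd G a)ᶜ := ⟨⟨d0, hsub hd0⟩⟩
    have hconn : (G.induce (closedNbhd G a)ᶜ).Connected := ⟨hExt a ha⟩
    obtain ⟨s, hsS, has⟩ := hD _ hsub hconn a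
    apply hsS
    rcases has with rfl | hadj
    · exact Set.mem_insert _ _
    · exact Set.mem_insert_iff.mpr (Or.inr (G.adj_symm hadj))
  -- choose a dominator for each extremity
  choose f hfD hfN using hdom
  let g : V → V := fun a => if h : a ∈ A then f a h else d0
  have hgD : ∀ a ∈ A, g a ∈ D := by intro a ha; simp only [g, dif_pos ha]; exact hfD a ha
  have hgN : ∀ a ∈ A, a ∈ closedNbhd G (g a) := by
    intro a ha; simp only [g, dif_pos ha]; exact hfN a ha
  have hAfin : A.Finite := Set.toFinite A
  have hDfin : D.Finite := Set.toFinite D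
  set As := hAfin.toFinset with hAs
  set Ds := hDfin.toFinset with hDs
  have hmaps : ∀ a ∈ As, g a ∈ Ds := by
    intro a ha
    rw [Set.Finite.mem_toFinset] at ha ⊢
    exact hgD a ha
  have hfiber : ∀ d ∈ Ds, (As.filter fun a => g a = d).card ≤ t - 1 := by
    intro d hd
    by_cases hdA : d ∈ A
    · -- fiber is a subset of {d}
      have : (As.filter fun a => g a = d) ⊆ {d} := by
        intro a ha
        rw [Finset.mem_filter, Set.Finite.mem_toFinset] at ha
        obtain ⟨haA, hgad⟩ := ha
        have hN : a ∈ closedNbhd G d := hgad ▸ hgN a haA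
        rcases hN with rfl | hadj
        · exact Finset.mem_singleton_self a
        · exact absurd hadj (hIndep hdA haA (fun hh => G.irrefl (hh ▸ hadj)))
      calc (As.filter fun a => g a = d).card ≤ 1 := by
            simpa using Finset.card_le_card this
        _ ≤ t - 1 := by omega
    · by_contra hc
      push_neg at hc
      have hT : t ≤ (As.filter fun a => g a = d).card := by omega
      obtain ⟨u, hu, hucard⟩ := Finset.exists_subset_card_eq hT
      apply hK1t
      refine ⟨d, ↑u, ?_, ?_, ?_⟩
      · rw [Set.ncard_coe_finset]; exact hucard
      · intro a ha
        rw [Finset.mem_coe] at ha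
        have ha' := hu ha
        rw [Finset.mem_filter, Set.Finite.mem_toFinset] at ha'
        obtain ⟨haA, hgad⟩ := ha'
        have hN : a ∈ closedNbhd G d := hgad ▸ hgN a haA
        rcases hN with rfl | hadj
        · exact absurd haA hdA
        · exact hadj
      · refine Set.Pairwise.mono ?_ hIndep
        intro a ha
        rw [Finset.mem_coe] at ha
        have ha' := hu ha
        rw [Finset.mem_filter, Set.Finite.mem_toFinset] at ha'
        exact ha'.1
  have hmain : As.card ≤ (t - 1) * Ds.card :=
    Finset.card_le_mul_card_image_of_maps_to hmaps (t - 1) hfiber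
  have h1 : A.ncard = As.card := Set.ncard_eq_toFinset_card A hAfin
  have h2 : D.ncard = Ds.card := Set.ncard_eq_toFinset_card D hDfin
  calc A.ncard = As.card := h1
    _ ≤ (t - 1) * Ds.card := hmain
    _ ≤ (t - 1) * k := Nat.mul_le_mul_left _ (h2 ▸ hk)
    _ = k * (t - 1) := Nat.mul_comm _ _
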